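/- Let p be an odd prime, m a positive integer, n = 2m, and q = p^n. Let δ ∈ F_q be such that either Tr_m^{2m}(δ) = 0, or Tr_m^{2m}(δ) ≠ 0 and (Tr_m^{2m}(δ) − 1)/Tr_m^{2m}(δ) = γ^{p−1} for some γ in the subfield F_{p^m}. Define F : F_q → F_q by F(x) = (x^{p^m} − x + δ)^{p^{m+1} + 1} + x. Then for every c in the subfield F_{p^m} of F_q with c ≠ 1 (i.e., c^{p^m} = c and c ≠ 1), F is PcN: for all a, b ∈ F_q the equation F(x+a) − c·F(x) = b has exactly one solution x ∈ F_q. -/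

import Mathlib

theorem stmt_17 (p m : ℕ) (hp : p.Prime) (hodd : Odd p) (hm : 0 < m)
    (F : Type*) [Field F] [Fintype F] (hF : Fintype.card F = p ^ (2 * m)) (δ c : F)
    (hδ : δ + δ ^ (p ^ m) = 0 ∨
      (δ + δ ^ (p ^ m) ≠ 0 ∧ ∃ γ : F, γ ^ (p ^ m) = γ ∧
        (δ + δ ^ (p ^ m) - 1) / (δ + δ ^ (p ^ m)) = γ ^ (p - 1)))
    (hc : c ^ (p ^ m) = c) (hc1 : c ≠ 1)
    (G : F → F)
    (hG : ∀ x, G x = (x ^ (p ^ m) - x + δ) ^ (p ^ (m + 1) + 1) + x) :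
    ∀ a b : F, ∃! x : F, G (x + a) - c * G x = b := by
  haveI : Fact p.Prime := ⟨hp⟩
  haveI hchar : CharP F p := by
    have h1 : p ∣ Fintype.card F := hF ▸ dvd_pow_self p (by omega)
    have h2 : p ∣ ringChar F := (prime_dvd_char_iff_dvd_card p).mpr h1
    have h3 : (ringChar F).Prime := CharP.char_is_prime F (ringChar F)
    exact ringChar.of_eq ((Nat.prime_dvd_prime_iff_eq hp h3).mp h2).symm
  have hp2 : (2 : F) ≠ 0 := by
    intro h
    have hdvd : p ∣ 2 := (CharP.cast_eq_zero_iff F p 2).mp h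
    have h2 : p = 2 := le_antisymm (Nat.le_of_dvd (by norm_num) hdvd) hp.two_le
    rw [h2, Nat.odd_iff] at hodd
    norm_num at hodd
  have hs0 : p ^ m ≠ 0 := pow_ne_zero m hp.ne_zero
  have hmul : p ^ m * p ^ m = Fintype.card F := by
    rw [hF, ← pow_add]; congr 1; omega
  have hsq : ∀ t : F, (t ^ p ^ m) ^ p ^ m = t := fun t => by
    rw [← pow_mul, hmul, FiniteField.pow_card]
  have hsub : ∀ t u : F, (t - u) ^ p ^ m = t ^ p ^ m - u ^ p ^ m := fun t u => by
    exact sub_pow_char_pow t u m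
  have hadd : ∀ t u : F, (t + u) ^ p ^ m = t ^ p ^ m + u ^ p ^ m := fun t u =>
    add_pow_char_pow t u p m
  have hsubp : ∀ t u : F, (t - u) ^ p = t ^ p - u ^ p := fun t u => by
    exact sub_pow_char t u
  have haddp : ∀ t u : F, (t + u) ^ p = t ^ p + u ^ p := fun t u =>
    add_pow_char t u p
  obtain ⟨T, hT⟩ : ∃ T : F, T = δ + δ ^ p ^ m := ⟨_, rfl⟩
  rw [← hT] at hδ
  have hTs : T ^ p ^ m = T := by rw [hT, hadd, hsq]; ring
  have hG' : ∀ x : F, G x = (T ^ p - (x ^ p ^ m - x + δ) ^ p) * (x ^ p ^ m - x + δ) + x := by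
    intro x
    rw [hG x]
    have e1 : p ^ (m + 1) + 1 = p ^ m * p + 1 := by rw [pow_succ]
    have e2 : (x ^ p ^ m - x + δ) ^ (p ^ m * p + 1)
        = ((x ^ p ^ m - x + δ) ^ p ^ m) ^ p * (x ^ p ^ m - x + δ) := by
      rw [pow_succ, pow_mul]
    have e3 : (x ^ p ^ m - x + δ) ^ p ^ m = T - (x ^ p ^ m - x + δ) := by
      rw [hadd, hsub, hsq, hT]; ring
    rw [e1, e2, e3, hsubp]
  have h1c : (1 : F) - c ≠ 0 := sub_ne_zero.mpr (Ne.symm hc1)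
  have hps : ∀ t : F, (t ^ p) ^ p ^ m = (t ^ p ^ m) ^ p := fun t => by
    rw [← pow_mul, ← pow_mul, Nat.mul_comm]
  have hnegp : ∀ t : F, (-t : F) ^ p = -(t ^ p) := fun t => hodd.neg_pow t
  intro a b
  have hinj : Function.Injective (fun x : F => G (x + a) - c * G x) := by
    intro x y hxy
    simp only at hxy
    obtain ⟨u, hu⟩ : ∃ u : F, u = x ^ p ^ m - x + δ := ⟨_, rfl⟩
    obtain ⟨v, hv⟩ : ∃ v : F, v = y ^ p ^ m - y + δ := ⟨_, rfl⟩
    obtain ⟨A, hA⟩ : ∃ A : F, A = a ^ p ^ m - a := ⟨_, rfl⟩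
    have hxa : (x + a) ^ p ^ m - (x + a) + δ = (x ^ p ^ m - x + δ) + (a ^ p ^ m - a) := by
      rw [hadd]; ring
    have hya : (y + a) ^ p ^ m - (y + a) + δ = (y ^ p ^ m - y + δ) + (a ^ p ^ m - a) := by
      rw [hadd]; ring
    rw [hG' (x + a), hG' x, hG' (y + a), hG' y, hxa, hya, ← hu, ← hv, ← hA] at hxy
    rw [haddp u A, haddp v A] at hxy
    have E1 : (1 - c) * (T ^ p * (u - v) - (u ^ p * u - v ^ p * v) + (x - y))
        - A * (u ^ p - v ^ p) - A ^ p * (u - v) = 0 := by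
      linear_combination hxy
    have hus : u ^ p ^ m = T - u := by rw [hu, hadd, hsub, hsq, hT]; ring
    have hvs : v ^ p ^ m = T - v := by rw [hv, hadd, hsub, hsq, hT]; ring
    have hAs : A ^ p ^ m = -A := by rw [hA, hsub, hsq]; ring
    have hxs : x ^ p ^ m = u + x - δ := by rw [hu]; ring
    have hys : y ^ p ^ m = v + y - δ := by rw [hv]; ring
    have E2 : (1 - c) * (T * (u ^ p - v ^ p) - (u ^ p * u - v ^ p * v) + ((u - v) + (x - y)))
        - A * (u ^ p - v ^ p) - A ^ p * (u - v) = 0 := by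
      have h0 := congrArg (· ^ p ^ m) E1
      simp only [hsub, hadd, mul_pow, hps, hus, hvs, hAs, hxs, hys, hTs, hc, one_pow,
        zero_pow hs0, hsubp, hnegp] at h0
      linear_combination h0
    have hstar0 : T * (u ^ p - v ^ p) - T ^ p * (u - v) + (u - v) = 0 := by
      have h3 : (1 - c) * (T * (u ^ p - v ^ p) - T ^ p * (u - v) + (u - v)) = (1 - c) * 0 := by
        linear_combination E2 - E1
      have h4 := mul_left_cancel₀ h1c h3
      linear_combination h4
    obtain ⟨w, hw⟩ : ∃ w : F, w = u - v := ⟨_, rfl⟩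
    have hstar : T * w ^ p - T ^ p * w + w = 0 := by
      rw [hw, hsubp]; linear_combination hstar0
    have hws : w ^ p ^ m = -w := by rw [hw, hsub, hus, hvs]; ring
    have hw0 : w = 0 := by
      rcases hδ with hT0 | ⟨hT0, γ, hγs, hγeq⟩
      · rw [hT0] at hstar
        simpa [zero_pow hp.ne_zero] using hstar
      · have hTm1 : T - 1 = γ ^ (p - 1) * T := by
          field_simp at hγeq
          linear_combination hγeq
        by_cases hγ0 : γ = 0
        · have hT1 : T = 1 := by
            rw [hγ0, zero_pow (by have := hp.two_le; omega : p - 1 ≠ 0)] at hTm1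
            linear_combination hTm1
          rw [hT1] at hstar
          have hwp0 : w ^ p = 0 := by rw [one_pow] at hstar; linear_combination hstar
          exact (pow_eq_zero_iff hp.ne_zero).mp hwp0
        · obtain ⟨η, hη⟩ : ∃ η : F, η = T * γ ^ p := ⟨_, rfl⟩
          have hη0 : η ≠ 0 := by rw [hη]; exact mul_ne_zero hT0 (pow_ne_zero p hγ0)
          have hTp1 : T ^ p - 1 = γ ^ ((p - 1) * p) * T ^ p := by
            have h5 := congrArg (· ^ p) hTm1
            rw [hsubp, one_pow, mul_pow, ← pow_mul] at h5
            linear_combination h5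
          have hTpow : T ^ p = T ^ (p - 1) * T := by
            rw [← pow_succ]; congr 1; have := hp.two_le; omega
          have h6 : T * w ^ p = T * (γ ^ ((p - 1) * p) * T ^ (p - 1) * w) := by
            have h5 : T * w ^ p = (T ^ p - 1) * w := by linear_combination hstar
            rw [h5, hTp1, hTpow]; ring
          have h7 := mul_left_cancel₀ hT0 h6
          have hηpow : η ^ (p - 1) = T ^ (p - 1) * γ ^ ((p - 1) * p) := by
            rw [hη, mul_pow, ← pow_mul, Nat.mul_comm p (p - 1)]
          have hwp : w ^ p = η ^ (p - 1) * w := by rw [hηpow]; linear_combination h7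
          obtain ⟨r, hr⟩ : ∃ r : F, r = w * η⁻¹ := ⟨_, rfl⟩
          have hw' : w = r * η := by rw [hr, inv_mul_cancel_right₀ hη0]
          have hppred : η ^ (p - 1) * η = η ^ p := by
            rw [← pow_succ]; congr 1; have := hp.two_le; omega
          have hrp : r ^ p = r := by
            apply mul_right_cancel₀ (pow_ne_zero p hη0)
            calc r ^ p * η ^ p = (r * η) ^ p := (mul_pow r η p).symm
              _ = w ^ p := by rw [← hw']
              _ = η ^ (p - 1) * w := hwp
              _ = η ^ (p - 1) * (r * η) := by rw [← hw']
              _ = r * η ^ p := by rw [← hppred]; ring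
          have hrpk : ∀ k : ℕ, r ^ p ^ k = r := by
            intro k
            induction k with
            | zero => simp
            | succ n ih => rw [pow_succ, pow_mul, ih, hrp]
          have hηs : η ^ p ^ m = η := by
            rw [hη, mul_pow, hTs, ← pow_mul, Nat.mul_comm p (p ^ m), pow_mul, hγs]
          have hrs2 : r ^ p ^ m = -r := by
            rw [hr, mul_pow, hws, inv_pow, hηs]; ring
          have h2r : (2 : F) * r = 0 := by linear_combination hrs2 - hrpk m
          have hr0 : r = 0 := by
            rcases mul_eq_zero.mp h2r with h | h
            · exact absurd h hp2
            · exact h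
          rw [hw', hr0, zero_mul]
    have huv : u = v := sub_eq_zero.mp (hw.symm.trans hw0)
    have hz : (1 - c) * (x - y) = 0 := by
      rw [huv] at E1
      linear_combination E1
    rcases mul_eq_zero.mp hz with h | h
    · exact absurd h h1c
    · exact sub_eq_zero.mp h
  have hbij : Function.Bijective (fun x : F => G (x + a) - c * G x) :=
    Finite.injective_iff_bijective.mp hinj
  obtain ⟨x, hx⟩ := hbij.surjective b
  exact ⟨x, hx, fun y hy => hbij.injective (hy.trans hx.symm)⟩
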